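/- Let 0 < γ < 1 < r ≤ 2. Define c_r = inf{ c > 0 : exp(x − c x^r) ≤ 1 + x for all x ≥ 0 }, c_r^{(γ)} = inf{ c > 0 : exp(x − c|x|^r) ≤ 1 + x for all −γ ≤ x ≤ 0 }, and c_{γ,r} = max{c_r, c_r^{(γ)}}. Then: (a) exp( x − c_{γ,r}|x|^r ) ≤ 1 + x for all x ≥ −γ; (b) c_r ≤ (r−1)^{r−1}(2−r)^{2−r}/r; and (c) c_r^{(γ)} = −{γ + log(1−γ)}/γ^r = Σ_{j=2}^∞ γ^{j−r}/j. -/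

import Mathlib

open Real

lemma sum1 {t : ℝ} (h0 : 0 ≤ t) (h1 : t < 1) :
    HasSum (fun j : ℕ => t ^ (j + 2) / ((j : ℝ) + 2)) (-(t + Real.log (1 - t))) := by
  have H := Real.hasSum_pow_div_log_of_abs_lt_one (x := t) (by rw [abs_of_nonneg h0]; exact h1)
  have H2 := (hasSum_nat_add_iff' (f := fun n : ℕ => t ^ (n + 1) / ((n : ℝ) + 1)) 1).mpr H
  simp only [Finset.range_one, Finset.sum_singleton, Nat.cast_zero] at H2
  convert H2 using 1
  · rfl
  · funext j; push_cast; ring_nf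
  · push_cast; ring

lemma sum2 {t r : ℝ} (ht : 0 < t) (h1 : t < 1) :
    HasSum (fun j : ℕ => t ^ ((j : ℝ) + 2 - r) / ((j : ℝ) + 2))
      (-(t + Real.log (1 - t)) / t ^ r) := by
  have H := (sum1 ht.le h1).div_const (t ^ r)
  convert H using 2 with j
  · rfl
  rw [show (j : ℝ) + 2 - r = ((j + 2 : ℕ) : ℝ) + (-r) by push_cast; ring,
    Real.rpow_add ht, Real.rpow_natCast, Real.rpow_neg ht.le]
  field_simp

lemma mono3 {t γ r : ℝ} (ht : 0 < t) (htγ : t ≤ γ) (hγ1 : γ < 1) (hr2 : r ≤ 2) :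
    -(t + Real.log (1 - t)) / t ^ r ≤ -(γ + Real.log (1 - γ)) / γ ^ r := by
  have hγ0 : 0 < γ := ht.trans_le htγ
  refine hasSum_le (fun j => ?_) (sum2 ht (lt_of_le_of_lt htγ hγ1)) (sum2 hγ0 hγ1)
  have he : (0:ℝ) ≤ (j : ℝ) + 2 - r := by
    have : (0:ℝ) ≤ (j : ℝ) := Nat.cast_nonneg j
    linarith
  have hp : (0:ℝ) < (j : ℝ) + 2 := by positivity
  gcongr

lemma young {r : ℝ} (hr1 : 1 < r) (hr2 : r ≤ 2) {x : ℝ} (hx : 0 ≤ x) :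
    x ^ (2 - r) ≤ (r - 1) ^ (r - 1) * (2 - r) ^ (2 - r) * (1 + x) := by
  have h1 : (0:ℝ) < r - 1 := by linarith
  have h2 : (0:ℝ) ≤ 2 - r := by linarith
  have hP : (0:ℝ) < (r - 1) ^ (r - 1) := Real.rpow_pos_of_pos h1 _
  have hQ : (0:ℝ) < (2 - r) ^ (2 - r) := by
    rcases h2.eq_or_lt with h | h
    · rw [← h, Real.rpow_zero]; norm_num
    · exact Real.rpow_pos_of_pos h _
  have G := Real.geom_mean_le_arith_mean2_weighted h1.le h2
      (by positivity : (0:ℝ) ≤ 1 / (r - 1)) (by positivity : (0:ℝ) ≤ x / (2 - r))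
      (by ring)
  have hL : (1 / (r - 1)) ^ (r - 1) * (x / (2 - r)) ^ (2 - r)
      = x ^ (2 - r) / ((r - 1) ^ (r - 1) * (2 - r) ^ (2 - r)) := by
    rw [Real.div_rpow (by norm_num) h1.le, Real.div_rpow hx h2, Real.one_rpow]
    field_simp
  have hR : (r - 1) * (1 / (r - 1)) + (2 - r) * (x / (2 - r)) ≤ 1 + x := by
    rcases h2.eq_or_lt with h | h
    · rw [← h]; field_simp; simpa using hx
    · rw [mul_one_div, div_self h1.ne', mul_div_cancel₀ _ h.ne']
  rw [hL] at G
  have := G.trans hR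
  calc x ^ (2 - r) = x ^ (2 - r) / ((r - 1) ^ (r - 1) * (2 - r) ^ (2 - r))
        * ((r - 1) ^ (r - 1) * (2 - r) ^ (2 - r)) := by field_simp
    _ ≤ (1 + x) * ((r - 1) ^ (r - 1) * (2 - r) ^ (2 - r)) :=
        mul_le_mul_of_nonneg_right this (by positivity)
    _ = (r - 1) ^ (r - 1) * (2 - r) ^ (2 - r) * (1 + x) := by ring

lemma keyB {r : ℝ} (hr1 : 1 < r) (hr2 : r ≤ 2) {x : ℝ} (hx : 0 ≤ x) :
    x - Real.log (1 + x) ≤ (r - 1) ^ (r - 1) * (2 - r) ^ (2 - r) / r * x ^ r := by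
  have hr0 : (0:ℝ) < r := by linarith
  set B : ℝ := (r - 1) ^ (r - 1) * (2 - r) ^ (2 - r) / r with hB
  set F : ℝ → ℝ := fun y => B * y ^ r - y + Real.log (1 + y) with hF
  have hd : ∀ y : ℝ, 0 < y → HasDerivAt F (B * (r * y ^ (r - 1)) - 1 + (1 + y)⁻¹ * 1) y := by
    intro y hy
    have h1 : HasDerivAt (fun z : ℝ => z ^ r) (r * y ^ (r - 1)) y :=
      Real.hasDerivAt_rpow_const (Or.inl hy.ne')
    have h2 : HasDerivAt (fun z : ℝ => Real.log (1 + z)) ((1 + y)⁻¹ * 1) y :=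
      (Real.hasDerivAt_log (by linarith)).comp y ((hasDerivAt_id y).const_add 1)
    exact ((h1.const_mul B).sub (hasDerivAt_id y)).add h2
  have hmono : MonotoneOn F (Set.Ici 0) := by
    apply monotoneOn_of_deriv_nonneg (convex_Ici 0)
    · apply ContinuousOn.add (ContinuousOn.sub ?_ continuousOn_id)
      · intro y hy
        simp only [Set.mem_Ici] at hy
        exact ((Real.continuousAt_log (by intro h; simp only [Pi.add_apply, id_eq] at h; linarith)).comp
          (continuousAt_const.add continuousAt_id)).continuousWithinAt
      · exact continuousOn_const.mul fun y _ =>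
          (Real.continuousAt_rpow_const y r (Or.inr hr0.le)).continuousWithinAt
    · intro y hy
      rw [interior_Ici] at hy
      exact (hd y hy).differentiableAt.differentiableWithinAt
    · intro y hy
      rw [interior_Ici] at hy
      rw [(hd y hy).deriv]
      have hy1 : (0:ℝ) < 1 + y := by linarith [Set.mem_Ioi.mp hy]
      have hy0 : (0:ℝ) < y := hy
      have hY := young hr1 hr2 hy0.le
      have hBr : B * r = (r - 1) ^ (r - 1) * (2 - r) ^ (2 - r) := by
        rw [hB]; field_simp
      have hpow : y ^ (2 - r) * y ^ (r - 1) = y := by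
        rw [← Real.rpow_add hy0]; norm_num
      have key : y ≤ B * r * y ^ (r - 1) * (1 + y) := by
        have h5 := mul_le_mul_of_nonneg_right hY
          (le_of_lt (Real.rpow_pos_of_pos hy0 (r - 1)))
        rw [hpow] at h5
        rw [hBr]
        nlinarith [h5]
      have h4 : y / (1 + y) ≤ B * r * y ^ (r - 1) := by
        rw [div_le_iff₀ hy1]; linarith
      have h3 : 1 - (1 + y)⁻¹ = y / (1 + y) := by field_simp; ring
      have h6 : B * (r * y ^ (r - 1)) = B * r * y ^ (r - 1) := by ring
      rw [mul_one]
      linarith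
  have h0 : F 0 = 0 := by
    simp [hF, Real.zero_rpow hr0.ne']
  have := hmono (Set.self_mem_Ici) (Set.mem_Ici.mpr hx) hx
  rw [h0] at this
  simp only [hF] at this
  linarith

/-- Lemma 3.9(i). -/
theorem stmt_8 (γ r : ℝ) (hγ0 : 0 < γ) (hγ1 : γ < 1) (hr1 : 1 < r) (hr2 : r ≤ 2) :
    let cr : ℝ := sInf {c : ℝ | 0 < c ∧ ∀ x ≥ (0 : ℝ), Real.exp (x - c * x ^ r) ≤ 1 + x}
    let crγ : ℝ := sInf {c : ℝ | 0 < c ∧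
      ∀ x : ℝ, -γ ≤ x → x ≤ 0 → Real.exp (x - c * |x| ^ r) ≤ 1 + x}
    let cγr : ℝ := max cr crγ
    (∀ x : ℝ, -γ ≤ x → Real.exp (x - cγr * |x| ^ r) ≤ 1 + x) ∧
    cr ≤ (r - 1) ^ (r - 1) * (2 - r) ^ (2 - r) / r ∧
    crγ = -(γ + Real.log (1 - γ)) / γ ^ r ∧
    crγ = ∑' j : ℕ, γ ^ ((j : ℝ) + 2 - r) / ((j : ℝ) + 2) := by
  intro cr crγ cγr
  have hr0 : (0:ℝ) < r := by linarith
  set B : ℝ := (r - 1) ^ (r - 1) * (2 - r) ^ (2 - r) / r with hBdef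
  set Sp : Set ℝ := {c : ℝ | 0 < c ∧ ∀ x ≥ (0 : ℝ), Real.exp (x - c * x ^ r) ≤ 1 + x}
    with hSp
  set Sm : Set ℝ := {c : ℝ | 0 < c ∧
      ∀ x : ℝ, -γ ≤ x → x ≤ 0 → Real.exp (x - c * |x| ^ r) ≤ 1 + x} with hSm
  have hcr : cr = sInf Sp := rfl
  have hcrγ : crγ = sInf Sm := rfl
  -- B is positive
  have hP : (0:ℝ) < (r - 1) ^ (r - 1) := Real.rpow_pos_of_pos (by linarith) _
  have hQ : (0:ℝ) < (2 - r) ^ (2 - r) := by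
    rcases (by linarith : (0:ℝ) ≤ 2 - r).eq_or_lt with h | h
    · rw [← h, Real.rpow_zero]; norm_num
    · exact Real.rpow_pos_of_pos h _
  have hB0 : 0 < B := by rw [hBdef]; positivity
  -- B ∈ Sp
  have hBmem : B ∈ Sp := by
    refine ⟨hB0, fun x hx => ?_⟩
    have h1x : (0:ℝ) < 1 + x := by linarith
    have := keyB hr1 hr2 hx
    calc Real.exp (x - B * x ^ r) ≤ Real.exp (Real.log (1 + x)) :=
          Real.exp_le_exp.mpr (by rw [hBdef]; linarith)
      _ = 1 + x := Real.exp_log h1x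
  have hSpNe : Sp.Nonempty := ⟨B, hBmem⟩
  have hSpBdd : BddBelow Sp := ⟨0, fun c hc => hc.1.le⟩
  -- (b)
  have partb : cr ≤ B := by rw [hcr]; exact csInf_le hSpBdd hBmem
  -- cr satisfies the inequality on [0, ∞)
  have Hpos : ∀ x : ℝ, 0 ≤ x → Real.exp (x - cr * x ^ r) ≤ 1 + x := by
    intro x hx
    rcases hx.eq_or_lt with h | h
    · simp [← h, Real.zero_rpow hr0.ne']
    · have hxr : (0:ℝ) < x ^ r := Real.rpow_pos_of_pos h r
      have h1x : (0:ℝ) < 1 + x := by linarith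
      rw [← Real.le_log_iff_exp_le h1x]
      apply le_of_forall_pos_le_add
      intro ε hε
      obtain ⟨c, hc, hclt⟩ := exists_lt_of_csInf_lt hSpNe
        (show sInf Sp < cr + ε / x ^ r by
          rw [← hcr]; exact lt_add_of_pos_right cr (div_pos hε hxr))
      have hcx : c * x ^ r < cr * x ^ r + ε := by
        have := mul_lt_mul_of_pos_right hclt hxr
        rwa [add_mul, div_mul_cancel₀ _ hxr.ne'] at this
      have hce : x - c * x ^ r ≤ Real.log (1 + x) :=
        (Real.le_log_iff_exp_le h1x).mpr (hc.2 x hx)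
      linarith
  -- the value A
  set A : ℝ := -(γ + Real.log (1 - γ)) / γ ^ r with hAdef
  have hγr : (0:ℝ) < γ ^ r := Real.rpow_pos_of_pos hγ0 r
  have hlog : Real.log (1 - γ) < -γ := by
    have := Real.log_lt_sub_one_of_pos (show (0:ℝ) < 1 - γ by linarith)
      (by intro h; exact hγ0.ne' (by linarith))
    linarith
  have hA0 : 0 < A := by
    rw [hAdef]
    apply div_pos (by linarith) hγr
  -- A satisfies the inequality on [-γ, 0]
  have HnegA : ∀ x : ℝ, -γ ≤ x → x ≤ 0 → Real.exp (x - A * |x| ^ r) ≤ 1 + x := by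
    intro x h1 h2
    rcases h2.eq_or_lt with h | h
    · simp [h, Real.zero_rpow hr0.ne']
    · have ht0 : 0 < -x := by linarith
      have htγ : -x ≤ γ := by linarith
      have h1x : (0:ℝ) < 1 + x := by linarith
      have hm := mono3 ht0 htγ hγ1 hr2
      rw [show 1 - -x = 1 + x by ring] at hm
      have habs : |x| = -x := abs_of_neg h
      have htr : (0:ℝ) < (-x) ^ r := Real.rpow_pos_of_pos ht0 r
      rw [← Real.le_log_iff_exp_le h1x, habs]
      rw [div_le_iff₀ htr] at hm
      rw [← hAdef] at hm
      linarith
  -- crγ = A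
  have hAmem : A ∈ Sm := ⟨hA0, HnegA⟩
  have partc : crγ = A := by
    rw [hcrγ]
    refine le_antisymm (csInf_le ⟨0, fun c hc => hc.1.le⟩ hAmem) (le_csInf ⟨A, hAmem⟩ ?_)
    intro c hc
    have hcγ := hc.2 (-γ) le_rfl (by linarith)
    rw [abs_neg, abs_of_pos hγ0, ← Real.le_log_iff_exp_le (by linarith)] at hcγ
    rw [hAdef, div_le_iff₀ hγr]
    rw [show (1:ℝ) + -γ = 1 - γ by ring] at hcγ
    linarith
  -- tsum form
  have partd : crγ = ∑' j : ℕ, γ ^ ((j : ℝ) + 2 - r) / ((j : ℝ) + 2) := by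
    rw [partc, hAdef]
    exact ((sum2 hγ0 hγ1).tsum_eq).symm
  refine ⟨?_, partb, partc, partd⟩
  -- part (a)
  intro x hx
  rcases le_or_gt 0 x with h | h
  · have habs : |x| = x := abs_of_nonneg h
    have hxr : (0:ℝ) ≤ x ^ r := Real.rpow_nonneg h r
    calc Real.exp (x - cγr * |x| ^ r) ≤ Real.exp (x - cr * x ^ r) := by
          apply Real.exp_le_exp.mpr
          rw [habs]
          have : cr ≤ cγr := le_max_left _ _
          nlinarith
      _ ≤ 1 + x := Hpos x h
  · have hxr : (0:ℝ) ≤ |x| ^ r := Real.rpow_nonneg (abs_nonneg x) r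
    calc Real.exp (x - cγr * |x| ^ r) ≤ Real.exp (x - A * |x| ^ r) := by
          apply Real.exp_le_exp.mpr
          have : A ≤ cγr := partc ▸ le_max_right cr crγ
          nlinarith
      _ ≤ 1 + x := HnegA x hx h.le
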